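/- Let V be a finite-dimensional real vector space and L ⊆ 𝕋_ℂV a lagrangian subspace. With K := (L ∩ L̄) ∩ 𝕋V, K^⊥ its orthogonal in 𝕋V, E := pr_{V_ℂ}(L), ε ∈ Λ²E* the unique form with L = L(E,ε), Δ := (E ∩ Ē) ∩ V, D := (E + Ē) ∩ V, ω_Δ := Im(ε|_{Δ×Δ}), and Δ₀ := {X ∈ Δ : ω_Δ(X,·) = 0}, the following hold: pr_V(K^⊥) = D and pr_V(K) = Δ₀, where pr_V : 𝕋V → V is the projection. -/

import Mathlib

open TensorProduct Module

noncomputable section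

namespace CDirac


/-- The real generalized tangent space `V ⊕ V*`. -/
abbrev TR (V : Type*) [AddCommGroup V] [Module ℝ V] := V × (V →ₗ[ℝ] ℝ)

variable {V : Type*} [AddCommGroup V] [Module ℝ V]

/-- The canonical pairing `⟨X+ξ, Y+η⟩ = (η X + ξ Y)/2` on `𝕋V`. -/
def pairR (a b : TR V) : ℝ := (b.2 a.1 + a.2 b.1) / 2

lemma pairR_add_left (a a' b : TR V) : pairR (a + a') b = pairR a b + pairR a' b := by
  simp only [pairR, Prod.fst_add, Prod.snd_add, map_add, LinearMap.add_apply]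
  ring

lemma pairR_smul_left (c : ℝ) (a b : TR V) : pairR (c • a) b = c * pairR a b := by
  simp only [pairR, Prod.smul_fst, Prod.smul_snd, map_smul, LinearMap.smul_apply,
    smul_eq_mul]
  ring

/-- Orthogonal complement with respect to the pairing on `𝕋V`. -/
def orthR (L : Submodule ℝ (TR V)) : Submodule ℝ (TR V) where
  carrier := {a | ∀ b ∈ L, pairR a b = 0}
  zero_mem' := fun b _ => by simp [pairR]
  add_mem' := fun {a a'} ha ha' b hb => by
    rw [pairR_add_left, ha b hb, ha' b hb, add_zero]
  smul_mem' := fun c a ha b hb => by rw [pairR_smul_left, ha b hb, mul_zero]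

/-- A real lagrangian subspace: `L = L^⊥`. -/
def IsLagrangianR (L : Submodule ℝ (TR V)) : Prop := L = orthR L

/-- An isotropic subspace of `𝕋V`. -/
def IsIsotropicR (K : Submodule ℝ (TR V)) : Prop := ∀ a ∈ K, ∀ b ∈ K, pairR a b = 0

/-- The quotient `K^⊥/K`. -/
abbrev quotK (K : Submodule ℝ (TR V)) :=
  @HasQuotient.Quotient ↥(orthR K) _ Submodule.hasQuotient (K.comap (orthR K).subtype)

/-- The quotient map `K^⊥ → K^⊥/K`. -/
def mkK (K : Submodule ℝ (TR V)) : ↥(orthR K) →ₗ[ℝ] quotK K :=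
  (Submodule.mkQ (R := ℝ) (M := ↥(orthR K)) (K.comap (orthR K).subtype) :)




/-- The complexification `V_ℂ = ℂ ⊗_ℝ V`. -/
abbrev Cx (V : Type*) [AddCommGroup V] [Module ℝ V] := ℂ ⊗[ℝ] V

/-- The complex dual `(V_ℂ)^*`. -/
abbrev DualC (V : Type*) [AddCommGroup V] [Module ℝ V] := Cx V →ₗ[ℂ] ℂ

/-- The complexified generalized tangent space `𝕋_ℂ V = V_ℂ ⊕ (V_ℂ)^*`. -/
abbrev TCx (V : Type*) [AddCommGroup V] [Module ℝ V] := Cx V × DualC V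

/-- The ℂ-bilinear pairing on `𝕋_ℂ V`. -/
def pairC (a b : TCx V) : ℂ := (b.2 a.1 + a.2 b.1) / 2

lemma pairC_add_left (a a' b : TCx V) : pairC (a + a') b = pairC a b + pairC a' b := by
  simp only [pairC, Prod.fst_add, Prod.snd_add, map_add, LinearMap.add_apply]
  ring

lemma pairC_smul_left (c : ℂ) (a b : TCx V) : pairC (c • a) b = c * pairC a b := by
  simp only [pairC, Prod.smul_fst, Prod.smul_snd, map_smul, LinearMap.smul_apply,
    smul_eq_mul]
  ring

/-- Orthogonal complement with respect to the ℂ-bilinear pairing on `𝕋_ℂ V`. -/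
def orthC (L : Submodule ℂ (TCx V)) : Submodule ℂ (TCx V) where
  carrier := {a | ∀ b ∈ L, pairC a b = 0}
  zero_mem' := fun b _ => by simp [pairC]
  add_mem' := fun {a a'} ha ha' b hb => by
    rw [pairC_add_left, ha b hb, ha' b hb, add_zero]
  smul_mem' := fun c a ha b hb => by rw [pairC_smul_left, ha b hb, mul_zero]

/-- A complex lagrangian subspace: `L = L^⊥`. -/
def IsLagrangianC (L : Submodule ℂ (TCx V)) : Prop := L = orthC L

private lemma conjCxAux_smul (z : ℂ) (x : Cx V) :
    TensorProduct.map Complex.conjAe.toLinearMap LinearMap.id (z • x) =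
      starRingEnd ℂ z • TensorProduct.map Complex.conjAe.toLinearMap LinearMap.id x := by
  induction x using TensorProduct.induction_on with
  | zero => simp
  | tmul w v => simp [smul_tmul', smul_eq_mul, Complex.conjAe_coe, map_mul]
  | add x y hx hy => simp only [smul_add, map_add, hx, hy]

/-- Conjugation on `V_ℂ`, as a `conj`-semilinear map. -/
def conjCx : Cx V →ₛₗ[starRingEnd ℂ] Cx V where
  toFun := TensorProduct.map Complex.conjAe.toLinearMap LinearMap.id
  map_add' := map_add _
  map_smul' := conjCxAux_smul

lemma conjCx_smul (z : ℂ) (x : Cx V) :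
    conjCx (z • x) = starRingEnd ℂ z • conjCx x := conjCxAux_smul z x

/-- Conjugation of a complex linear functional. -/
def conjDualFun (ξ : DualC V) : DualC V where
  toFun x := starRingEnd ℂ (ξ (conjCx x))
  map_add' x y := by simp
  map_smul' z x := by
    rw [conjCx_smul, map_smul, smul_eq_mul, map_mul, RingHom.id_apply]
    simp [smul_eq_mul]

/-- Conjugation on `(V_ℂ)^*`, as a `conj`-semilinear map. -/
def conjDual : DualC V →ₛₗ[starRingEnd ℂ] DualC V where
  toFun := conjDualFun
  map_add' ξ η := by ext x; simp [conjDualFun]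
  map_smul' z ξ := by
    ext x
    simp [conjDualFun, smul_eq_mul, map_mul]

/-- Conjugation on `𝕋_ℂ V`, as a `conj`-semilinear map. -/
def conjT : TCx V →ₛₗ[starRingEnd ℂ] TCx V where
  toFun a := (conjCx a.1, conjDual a.2)
  map_add' a b := by simp [Prod.ext_iff]
  map_smul' z a := by
    simp [Prod.ext_iff, Prod.smul_fst, Prod.smul_snd, map_smulₛₗ]

instance : RingHomSurjective (starRingEnd ℂ) :=
  ⟨fun z => ⟨starRingEnd ℂ z, by simp⟩⟩

/-- The conjugate `L̄` of a ℂ-subspace of `𝕋_ℂ V`. -/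
def conjSub (L : Submodule ℂ (TCx V)) : Submodule ℂ (TCx V) := L.map conjT

/-- The conjugate `Ē` of a ℂ-subspace of `V_ℂ`. -/
def conjE (E : Submodule ℂ (Cx V)) : Submodule ℂ (Cx V) := E.map conjCx

/-- The canonical inclusion `V → V_ℂ`, `v ↦ 1 ⊗ v`. -/
def iV : V →ₗ[ℝ] Cx V := TensorProduct.mk ℝ ℂ V 1





/-- ℝ-linear auxiliary version of the ℂ-linear extension of a real functional. -/
def dualExtAux (α : V →ₗ[ℝ] ℝ) : Cx V →ₗ[ℝ] ℂ :=
  TensorProduct.lift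
    (LinearMap.mk₂ ℝ (fun z v => z * (α v : ℂ))
      (fun z w v => by push_cast; ring)
      (fun r z v => by simp only [Complex.real_smul]; ring)
      (fun z v w => by push_cast [map_add]; ring)
      (fun r z v => by simp only [map_smul, smul_eq_mul, Complex.real_smul]; push_cast; ring))

private lemma dualExtAux_smulC (α : V →ₗ[ℝ] ℝ) (z : ℂ) (x : Cx V) :
    dualExtAux α (z • x) = z * dualExtAux α x := by
  induction x using TensorProduct.induction_on with
  | zero => simp
  | tmul w v =>
      simp only [dualExtAux, smul_tmul', lift.tmul, LinearMap.mk₂_apply, smul_eq_mul]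
      ring
  | add x y hx hy => simp only [smul_add, map_add, hx, hy]; ring

/-- The ℂ-linear extension of a real functional `α : V → ℝ` to `V_ℂ`. -/
def dualExtFun (α : V →ₗ[ℝ] ℝ) : DualC V where
  toFun := dualExtAux α
  map_add' := map_add _
  map_smul' z x := by simpa using dualExtAux_smulC α z x

private lemma dualExtFun_tmul (α : V →ₗ[ℝ] ℝ) (z : ℂ) (v : V) :
    dualExtFun α (z ⊗ₜ[ℝ] v) = z * (α v : ℂ) := by
  simp [dualExtFun, dualExtAux]

/-- The ℂ-linear extension map `V^* → (V_ℂ)^*`, as an ℝ-linear map. -/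
def dualExt : (V →ₗ[ℝ] ℝ) →ₗ[ℝ] DualC V where
  toFun := dualExtFun
  map_add' α β := by
    apply LinearMap.ext; intro x
    induction x using TensorProduct.induction_on with
    | zero => simp
    | tmul w v =>
        simp only [dualExtFun_tmul, LinearMap.add_apply]
        push_cast
        ring
    | add x y hx hy =>
        simp only [map_add, LinearMap.add_apply] at *
        rw [hx, hy]
  map_smul' r α := by
    apply LinearMap.ext; intro x
    induction x using TensorProduct.induction_on with
    | zero => simp
    | tmul w v =>
        simp only [dualExtFun_tmul, RingHom.id_apply, LinearMap.smul_apply,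
          LinearMap.smul_apply, smul_eq_mul, Complex.real_smul]
        push_cast
        ring
    | add x y hx hy =>
        simp only [map_add, RingHom.id_apply, LinearMap.smul_apply, smul_eq_mul] at *
        rw [hx, hy]

/-- The canonical inclusion `𝕋V → 𝕋_ℂV`. -/
def iT : TR V →ₗ[ℝ] TCx V where
  toFun a := (iV a.1, dualExt a.2)
  map_add' a b := by simp [Prod.ext_iff]
  map_smul' r a := by simp [Prod.ext_iff]



/-- Auxiliary ℝ-linear version of the ℂ-bilinear extension of a real bilinear form. -/
def bilinExtAux (B : V →ₗ[ℝ] V →ₗ[ℝ] ℝ) : Cx V →ₗ[ℝ] DualC V :=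
  TensorProduct.lift
    (LinearMap.mk₂ ℝ (fun z v => z • dualExt (B v))
      (fun z w v => by simp only [add_smul])
      (fun r z v => by simp only [smul_assoc])
      (fun z v w => by simp only [map_add, smul_add])
      (fun r z v => by simp only [map_smul]; exact smul_comm z r _))

private lemma bilinExtAux_smulC (B : V →ₗ[ℝ] V →ₗ[ℝ] ℝ) (z : ℂ) (x : Cx V) :
    bilinExtAux B (z • x) = z • bilinExtAux B x := by
  induction x using TensorProduct.induction_on with
  | zero => simp
  | tmul w v =>
      simp only [bilinExtAux, smul_tmul', lift.tmul, LinearMap.mk₂_apply, smul_eq_mul,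
        mul_smul]
  | add x y hx hy => simp only [smul_add, map_add, hx, hy]

/-- The ℂ-bilinear extension of a real bilinear form `B : V × V → ℝ` to `V_ℂ`. -/
def bilinExt (B : V →ₗ[ℝ] V →ₗ[ℝ] ℝ) : Cx V →ₗ[ℂ] DualC V where
  toFun := bilinExtAux B
  map_add' := map_add _
  map_smul' z x := by simpa using bilinExtAux_smulC B z x

/-- The `B`-transformation `e^B(X+ξ) = X + ξ + B̃(X,·)` of `𝕋_ℂV`, for a real `B`. -/
def eB (B : V →ₗ[ℝ] V →ₗ[ℝ] ℝ) : TCx V →ₗ[ℂ] TCx V where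
  toFun a := (a.1, a.2 + bilinExt B a.1)
  map_add' a b := by
    simp only [Prod.fst_add, Prod.snd_add, map_add, Prod.mk_add_mk, Prod.mk.injEq]
    exact ⟨trivial, by abel⟩
  map_smul' z a := by
    simp only [Prod.smul_fst, Prod.smul_snd, map_smul, RingHom.id_apply, Prod.smul_mk,
      Prod.mk.injEq, smul_add]

/-- The real `B`-transformation `e^B(X+α) = X + α + B(X,·)` of `𝕋V`. -/
def eBR (B : V →ₗ[ℝ] V →ₗ[ℝ] ℝ) : TR V →ₗ[ℝ] TR V where
  toFun a := (a.1, a.2 + B a.1)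
  map_add' a b := by
    simp only [Prod.fst_add, Prod.snd_add, map_add, Prod.mk_add_mk, Prod.mk.injEq]
    exact ⟨trivial, by abel⟩
  map_smul' r a := by
    simp only [Prod.smul_fst, Prod.smul_snd, map_smul, RingHom.id_apply, Prod.smul_mk,
      Prod.mk.injEq, smul_add]


/-- The range `E = pr_{V_ℂ}(L)` of a subspace of `𝕋_ℂV`. -/
def Esub (L : Submodule ℂ (TCx V)) : Submodule ℂ (Cx V) :=
  L.map (LinearMap.fst ℂ (Cx V) (DualC V))

/-- The real index `r = dim_ℂ (L ∩ L̄)`. -/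
def riL (L : Submodule ℂ (TCx V)) : ℕ := finrank ℂ ↥(L ⊓ conjSub L)

/-- The real part `K = (L ∩ L̄) ∩ 𝕋V`, as a subspace of `𝕋V`. -/
def Ksub (L : Submodule ℂ (TCx V)) : Submodule ℝ (TR V) :=
  ((L ⊓ conjSub L).restrictScalars ℝ).comap iT

/-- The distribution `D = (E + Ē) ∩ V`, as a subspace of `V`. -/
def Dsub (L : Submodule ℂ (TCx V)) : Submodule ℝ V :=
  ((Esub L ⊔ conjE (Esub L)).restrictScalars ℝ).comap iV

/-- The distribution `Δ = (E ∩ Ē) ∩ V`, as a subspace of `V`. -/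
def DeltaSub (L : Submodule ℂ (TCx V)) : Submodule ℝ V :=
  ((Esub L ⊓ conjE (Esub L)).restrictScalars ℝ).comap iV

/-- The order `s = dim V - dim D`. -/
def orderL (L : Submodule ℂ (TCx V)) : ℕ := finrank ℝ V - finrank ℝ ↥(Dsub L)

/-- The (normalized) type `k = dim_ℂ(E + Ē) - dim_ℂ E`. -/
def typeL (L : Submodule ℂ (TCx V)) : ℕ :=
  finrank ℂ ↥(Esub L ⊔ conjE (Esub L)) - finrank ℂ ↥(Esub L)


end CDirac

open CDirac Module
section Aux

namespace CDirac

variable {V : Type*} [AddCommGroup V] [Module ℝ V]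

/-- Real part of a vector in `V_ℂ`. -/
def ReV : Cx V →ₗ[ℝ] V :=
  TensorProduct.lift
    (LinearMap.mk₂ ℝ (fun z v => z.re • v)
      (fun z w v => by simp [add_smul])
      (fun r z v => by rw [Complex.real_smul]; simp [Complex.mul_re, mul_smul])
      (fun z v w => by simp [smul_add])
      (fun r z v => smul_comm _ _ _))

/-- Imaginary part of a vector in `V_ℂ`. -/
def ImV : Cx V →ₗ[ℝ] V :=
  TensorProduct.lift
    (LinearMap.mk₂ ℝ (fun z v => z.im • v)
      (fun z w v => by simp [add_smul])
      (fun r z v => by rw [Complex.real_smul]; simp [Complex.mul_im, mul_smul])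
      (fun z v w => by simp [smul_add])
      (fun r z v => smul_comm _ _ _))

lemma iV_apply (v : V) : iV v = (1 : ℂ) ⊗ₜ[ℝ] v := rfl

lemma ReV_tmul (z : ℂ) (v : V) : ReV (z ⊗ₜ[ℝ] v) = z.re • v := rfl
lemma ImV_tmul (z : ℂ) (v : V) : ImV (z ⊗ₜ[ℝ] v) = z.im • v := rfl

lemma ReV_iV (v : V) : ReV (iV v) = v := by simp [iV_apply, ReV_tmul]
lemma ImV_iV (v : V) : ImV (iV v) = 0 := by simp [iV_apply, ImV_tmul]

lemma decompV (x : Cx V) : iV (ReV x) + Complex.I • iV (ImV x) = x := by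
  induction x using TensorProduct.induction_on with
  | zero => simp
  | tmul z v =>
      rw [ReV_tmul, ImV_tmul, iV_apply, iV_apply, TensorProduct.tmul_smul,
        TensorProduct.tmul_smul]
      rw [show (z.re : ℝ) • ((1:ℂ) ⊗ₜ[ℝ] v) = (z.re : ℂ) • ((1:ℂ) ⊗ₜ[ℝ] v) from
        (algebraMap_smul ℂ z.re ((1:ℂ) ⊗ₜ[ℝ] v)).symm,
        show (z.im : ℝ) • ((1:ℂ) ⊗ₜ[ℝ] v) = (z.im : ℂ) • ((1:ℂ) ⊗ₜ[ℝ] v) from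
        (algebraMap_smul ℂ z.im ((1:ℂ) ⊗ₜ[ℝ] v)).symm]
      rw [smul_smul, TensorProduct.smul_tmul', TensorProduct.smul_tmul', ← TensorProduct.add_tmul]
      congr 1
      simp [Complex.ext_iff]
  | add x y hx hy =>
      conv_rhs => rw [← hx, ← hy]
      simp only [map_add, smul_add]
      try abel

lemma conjCx_tmul (z : ℂ) (v : V) :
    conjCx (z ⊗ₜ[ℝ] v) = (starRingEnd ℂ z) ⊗ₜ[ℝ] v := by
  simp [conjCx, Complex.conjAe_coe]

lemma conjCx_iV (v : V) : conjCx (iV v) = iV v := by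
  rw [iV_apply, conjCx_tmul]; simp

lemma conjCx_conjCx (x : Cx V) : conjCx (conjCx x) = x := by
  induction x using TensorProduct.induction_on with
  | zero => simp
  | tmul z v => rw [conjCx_tmul, conjCx_tmul]; simp
  | add x y hx hy => rw [map_add, map_add, hx, hy]

lemma ReV_conjCx (x : Cx V) : ReV (conjCx x) = ReV x := by
  induction x using TensorProduct.induction_on with
  | zero => simp
  | tmul z v => rw [conjCx_tmul, ReV_tmul, ReV_tmul]; simp
  | add x y hx hy => rw [map_add, map_add, map_add, hx, hy]

lemma ImV_conjCx (x : Cx V) : ImV (conjCx x) = - ImV x := by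
  induction x using TensorProduct.induction_on with
  | zero => simp
  | tmul z v => rw [conjCx_tmul, ImV_tmul, ImV_tmul]; simp
  | add x y hx hy => rw [map_add, map_add, map_add, hx, hy]; abel

lemma iV_ReV_eq (x : Cx V) : iV (ReV x) = (2:ℂ)⁻¹ • (x + conjCx x) := by
  have h1 := decompV x
  have h2 := decompV (conjCx x)
  rw [ReV_conjCx, ImV_conjCx, map_neg, smul_neg] at h2
  set a := iV (ReV x) with ha
  set b := Complex.I • iV (ImV x) with hb
  have : x + conjCx x = (2:ℂ) • a := by
    rw [← h2, ← h1, two_smul]; abel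
  rw [this, smul_smul]; norm_num

lemma iV_ImV_eq (x : Cx V) : iV (ImV x) = ((2:ℂ)*Complex.I)⁻¹ • (x - conjCx x) := by
  have h1 := decompV x
  have h2 := decompV (conjCx x)
  rw [ReV_conjCx, ImV_conjCx, map_neg, smul_neg] at h2
  set a := iV (ReV x) with ha
  set b := iV (ImV x) with hb
  have : x - conjCx x = ((2:ℂ)*Complex.I) • b := by
    rw [← h2, ← h1, mul_smul, two_smul]; abel
  rw [this, smul_smul]
  rw [inv_mul_cancel₀ (by simp [Complex.ext_iff] : (2:ℂ)*Complex.I ≠ 0), one_smul]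

lemma mem_ReV {W : Submodule ℂ (Cx V)} (hW : ∀ y ∈ W, conjCx y ∈ W) {x : Cx V}
    (hx : x ∈ W) : iV (ReV x) ∈ W ∧ iV (ImV x) ∈ W := by
  constructor
  · rw [iV_ReV_eq]; exact W.smul_mem _ (W.add_mem hx (hW x hx))
  · rw [iV_ImV_eq]; exact W.smul_mem _ (W.sub_mem hx (hW x hx))

lemma eqOn_real {W : Submodule ℂ (Cx V)} (hW : ∀ y ∈ W, conjCx y ∈ W)
    (f g : DualC V) (h : ∀ v : V, iV v ∈ W → f (iV v) = g (iV v)) {x : Cx V}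
    (hx : x ∈ W) : f x = g x := by
  obtain ⟨h1, h2⟩ := mem_ReV hW hx
  have hd := decompV x
  calc f x = f (iV (ReV x)) + Complex.I * f (iV (ImV x)) := by
        conv_lhs => rw [← hd]
        simp [smul_eq_mul]
    _ = g (iV (ReV x)) + Complex.I * g (iV (ImV x)) := by rw [h _ h1, h _ h2]
    _ = g x := by
        conv_rhs => rw [← hd]
        simp [smul_eq_mul]

lemma dual_ext_iV (f g : DualC V) (h : ∀ v : V, f (iV v) = g (iV v)) : f = g := by
  ext x
  exact eqOn_real (W := ⊤) (fun y _ => Submodule.mem_top) f g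
    (fun v _ => h v) Submodule.mem_top

lemma dualExt_iV (α : V →ₗ[ℝ] ℝ) (v : V) : dualExt α (iV v) = (α v : ℂ) := by
  simp [dualExt, dualExtFun, dualExtAux, iV_apply]

lemma conjDual_apply (ξ : DualC V) (x : Cx V) :
    conjDual ξ x = starRingEnd ℂ (ξ (conjCx x)) := rfl

lemma conjDual_conjDual (ξ : DualC V) : conjDual (conjDual ξ) = ξ := by
  apply LinearMap.ext; intro x
  rw [conjDual_apply, conjDual_apply, conjCx_conjCx]
  simp

lemma conjDual_dualExt (α : V →ₗ[ℝ] ℝ) : conjDual (dualExt α) = dualExt α := by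
  apply dual_ext_iV
  intro v
  rw [conjDual_apply, conjCx_iV, dualExt_iV]
  simp

lemma exists_real_dual (ξ : DualC V) (h : ∀ v : V, (ξ (iV v)).im = 0) :
    ∃ α : V →ₗ[ℝ] ℝ, dualExt α = ξ := by
  refine ⟨Complex.reLm ∘ₗ (ξ.restrictScalars ℝ) ∘ₗ iV, dual_ext_iV _ _ fun v => ?_⟩
  rw [dualExt_iV]
  simp only [LinearMap.comp_apply, LinearMap.restrictScalars_apply, Complex.reLm_coe]
  exact Complex.ext (by simp) (by simpa using (h v).symm)

lemma conjT_iT (a : TR V) : conjT (iT a) = iT a := by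
  show (conjCx (iV a.1), conjDual (dualExt a.2)) = _
  rw [conjCx_iV, conjDual_dualExt]; rfl

lemma conjT_conjT (m : TCx V) : conjT (conjT m) = m := by
  show (conjCx (conjCx m.1), conjDual (conjDual m.2)) = m
  rw [conjCx_conjCx, conjDual_conjDual]

lemma pairC_iT (a b : TR V) : pairC (iT a) (iT b) = ((pairR a b : ℝ) : ℂ) := by
  show (dualExt b.2 (iV a.1) + dualExt a.2 (iV b.1)) / 2 = _
  rw [dualExt_iV, dualExt_iV, pairR]
  push_cast
  ring

lemma pairC_conjT (a b : TCx V) :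
    pairC (conjT a) (conjT b) = starRingEnd ℂ (pairC a b) := by
  show (conjDual b.2 (conjCx a.1) + conjDual a.2 (conjCx b.1)) / 2 = _
  rw [conjDual_apply, conjDual_apply, conjCx_conjCx, conjCx_conjCx, pairC]
  rw [map_div₀, map_add, show (starRingEnd ℂ) 2 = 2 from map_ofNat _ 2]

lemma mem_conjE {E : Submodule ℂ (Cx V)} {x : Cx V} :
    x ∈ conjE E ↔ conjCx x ∈ E := by
  constructor
  · rintro ⟨w, hw, rfl⟩; rwa [conjCx_conjCx]
  · intro h; exact ⟨conjCx x, h, conjCx_conjCx x⟩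

lemma mem_conjSub {L : Submodule ℂ (TCx V)} {m : TCx V} :
    m ∈ conjSub L ↔ conjT m ∈ L := by
  constructor
  · rintro ⟨w, hw, rfl⟩; rwa [conjT_conjT]
  · intro h; exact ⟨conjT m, h, conjT_conjT m⟩

lemma mem_orthC {L : Submodule ℂ (TCx V)} {a : TCx V} :
    a ∈ orthC L ↔ ∀ b ∈ L, pairC a b = 0 := Iff.rfl

lemma mem_orthR {K : Submodule ℝ (TR V)} {a : TR V} :
    a ∈ orthR K ↔ ∀ b ∈ K, pairR a b = 0 := Iff.rfl

end CDirac

end Aux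
section Aux2

namespace CDirac

variable {V : Type*} [AddCommGroup V] [Module ℝ V]

/-- The conjugate functional on `Ē` induced by a functional on `E`. -/
def conjRestrict (E : Submodule ℂ (Cx V)) (φ : ↥E →ₗ[ℂ] ℂ) : ↥(conjE E) →ₗ[ℂ] ℂ where
  toFun x := starRingEnd ℂ (φ ⟨conjCx ↑x, mem_conjE.mp x.2⟩)
  map_add' x y := by
    have h : (⟨conjCx ↑(x + y), mem_conjE.mp (x + y).2⟩ : ↥E)
        = ⟨conjCx ↑x, mem_conjE.mp x.2⟩ + ⟨conjCx ↑y, mem_conjE.mp y.2⟩ :=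
      Subtype.ext (by simp [map_add])
    rw [h, map_add, map_add]
  map_smul' z x := by
    have h : (⟨conjCx ↑(z • x), mem_conjE.mp (z • x).2⟩ : ↥E)
        = (starRingEnd ℂ z) • ⟨conjCx ↑x, mem_conjE.mp x.2⟩ :=
      Subtype.ext (by simp [conjCx_smul])
    rw [h, map_smul, smul_eq_mul, map_mul, Complex.conj_conj, RingHom.id_apply,
      smul_eq_mul]

lemma conjRestrict_apply (E : Submodule ℂ (Cx V)) (φ : ↥E →ₗ[ℂ] ℂ) (x : ↥(conjE E)) :
    conjRestrict E φ x = starRingEnd ℂ (φ ⟨conjCx ↑x, mem_conjE.mp x.2⟩) := rfl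

/-- A functional on `E` whose restriction to `Δ = (E ∩ Ē) ∩ V` is real extends to the
complexification of a real functional on `V`. -/
lemma exists_real_restriction (E : Submodule ℂ (Cx V)) (φ : ↥E →ₗ[ℂ] ℂ)
    (hreal : ∀ (v : V) (hv : iV v ∈ E), iV v ∈ conjE E → (φ ⟨iV v, hv⟩).im = 0) :
    ∃ α : V →ₗ[ℝ] ℝ, ∀ (y : Cx V) (hy : y ∈ E), dualExt α y = φ ⟨y, hy⟩ := by
  classical
  set Eb := conjE E with hEbdef
  set Δc := E ⊓ Eb with hΔc
  set Ws := E ⊔ Eb with hWs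
  have hWstable : ∀ y ∈ Ws, conjCx y ∈ Ws := by
    intro y hy
    obtain ⟨a, haE, b, hbE, rfl⟩ := Submodule.mem_sup.mp hy
    rw [map_add]
    exact Submodule.add_mem _ (Submodule.mem_sup_right (Submodule.mem_map_of_mem haE))
      (Submodule.mem_sup_left (mem_conjE.mp hbE))
  have hΔstable : ∀ y ∈ Δc, conjCx y ∈ Δc := by
    intro y hy
    obtain ⟨h1, h2⟩ := Submodule.mem_inf.mp hy
    exact Submodule.mem_inf.mpr ⟨mem_conjE.mp h2, Submodule.mem_map_of_mem h1⟩
  set φb := conjRestrict E φ with hφbdef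
  obtain ⟨C₁, hC₁⟩ := Submodule.exists_isCompl Δc
  set C' := C₁ ⊓ Eb with hC'def
  have hΔEb : Δc ≤ Eb := inf_le_right
  have hΔE : Δc ≤ E := inf_le_left
  have hsupC' : Δc ⊔ C' = Eb := by
    rw [hC'def, ← sup_inf_assoc_of_le _ hΔEb, hC₁.codisjoint.eq_top, top_inf_eq]
  have hEC' : E ⊓ C' = ⊥ := by
    rw [hC'def, inf_comm C₁ Eb, ← inf_assoc, ← hΔc, hC₁.disjoint.eq_bot]
  obtain ⟨C₂, hC₂⟩ := Submodule.exists_isCompl Ws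
  set C := C' ⊔ C₂ with hCdef
  have hC'Ws : C' ≤ Ws := le_trans inf_le_right le_sup_right
  have hCWs : C ⊓ Ws = C' := by
    rw [hCdef, sup_inf_assoc_of_le _ hC'Ws, inf_comm C₂ Ws, hC₂.disjoint.eq_bot,
      sup_bot_eq]
  have hEWs : E ≤ Ws := le_sup_left
  have hcompl : IsCompl E C := by
    constructor
    · rw [disjoint_iff]
      calc E ⊓ C = (E ⊓ Ws) ⊓ C := by rw [inf_eq_left.mpr hEWs]
        _ = E ⊓ (C ⊓ Ws) := by rw [inf_assoc, inf_comm Ws C]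
        _ = E ⊓ C' := by rw [hCWs]
        _ = ⊥ := hEC'
    · rw [codisjoint_iff]
      have hEsupC' : E ⊔ C' = Ws := by
        rw [show E ⊔ C' = E ⊔ (Δc ⊔ C') by rw [← sup_assoc, sup_eq_left.mpr hΔE],
          hsupC']
      calc E ⊔ C = (E ⊔ C') ⊔ C₂ := by rw [hCdef, sup_assoc]
        _ = Ws ⊔ C₂ := by rw [hEsupC']
        _ = ⊤ := hC₂.codisjoint.eq_top
  have hC'le : C' ≤ Eb := inf_le_right
  have hC'C : C' ≤ C := le_sup_left
  set C'sub := C'.comap C.subtype with hC'sub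
  set j : ↥C'sub →ₗ[ℂ] ↥Eb :=
    { toFun := fun x => ⟨((x : ↥C) : Cx V), hC'le x.2⟩,
      map_add' := fun x y => rfl,
      map_smul' := fun z x => rfl } with hjdef
  set g : ↥C →ₗ[ℂ] ℂ := Subspace.dualLift C'sub (φb ∘ₗ j) with hgdef
  set ψ : Cx V →ₗ[ℂ] ℂ := LinearMap.ofIsCompl hcompl φ g with hψdef
  have hψE : ∀ (y : Cx V) (hy : y ∈ E), ψ y = φ ⟨y, hy⟩ := fun y hy =>
    LinearMap.ofIsCompl_left_apply hcompl ⟨y, hy⟩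
  have hψC' : ∀ (c : Cx V) (hc : c ∈ C'), ψ c = φb ⟨c, hC'le hc⟩ := by
    intro c hc
    have hcC : c ∈ C := hC'C hc
    have hmem : (⟨c, hcC⟩ : ↥C) ∈ C'sub := hc
    have h1 : ψ c = g ⟨c, hcC⟩ := LinearMap.ofIsCompl_right_apply hcompl ⟨c, hcC⟩
    rw [h1, hgdef, Subspace.dualLift_of_mem hmem]
    rfl
  have hφΔ : ∀ (d : Cx V) (hd1 : d ∈ E) (hd2 : d ∈ Eb),
      φ ⟨d, hd1⟩ = φb ⟨d, hd2⟩ := by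
    intro d hd1 hd2
    have hdΔ : d ∈ Δc := Submodule.mem_inf.mpr ⟨hd1, hd2⟩
    obtain ⟨hre, him⟩ := mem_ReV hΔstable hdΔ
    have hreE := (Submodule.mem_inf.mp hre).1
    have hreEb := (Submodule.mem_inf.mp hre).2
    have himE := (Submodule.mem_inf.mp him).1
    have himEb := (Submodule.mem_inf.mp him).2
    have hd := decompV d
    set A := φ ⟨iV (ReV d), hreE⟩ with hA
    set B := φ ⟨iV (ImV d), himE⟩ with hB
    have hAim : A.im = 0 := hreal _ hreE hreEb
    have hBim : B.im = 0 := hreal _ himE himEb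
    have hdE : (⟨d, hd1⟩ : ↥E) = ⟨iV (ReV d), hreE⟩ + Complex.I • ⟨iV (ImV d), himE⟩ :=
      Subtype.ext (by push_cast; exact hd.symm)
    have hφd : φ ⟨d, hd1⟩ = A + Complex.I * B := by
      rw [hdE, map_add, map_smul, smul_eq_mul]
    have hcd : conjCx d = iV (ReV d) - Complex.I • iV (ImV d) := by
      conv_lhs => rw [← hd]
      rw [map_add, conjCx_iV, conjCx_smul, conjCx_iV, Complex.conj_I, neg_smul,
        sub_eq_add_neg]
    have hcdE : conjCx d ∈ E := mem_conjE.mp hd2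
    have hcdEsub : (⟨conjCx d, hcdE⟩ : ↥E)
        = ⟨iV (ReV d), hreE⟩ - Complex.I • ⟨iV (ImV d), himE⟩ :=
      Subtype.ext (by push_cast; exact hcd)
    have hφcd : φ ⟨conjCx d, hcdE⟩ = A - Complex.I * B := by
      rw [hcdEsub, map_sub, map_smul, smul_eq_mul]
    have : φb ⟨d, hd2⟩ = starRingEnd ℂ (φ ⟨conjCx d, hcdE⟩) := by
      rw [hφbdef, conjRestrict_apply]
    rw [this, hφcd, hφd, map_sub, map_mul, Complex.conj_I,
      Complex.conj_eq_iff_im.mpr hAim, Complex.conj_eq_iff_im.mpr hBim]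
    ring
  have hψEb : ∀ (y : Cx V) (hy : y ∈ Eb), ψ y = φb ⟨y, hy⟩ := by
    intro y hy
    have hy' : y ∈ Δc ⊔ C' := by rw [hsupC']; exact hy
    obtain ⟨d, hd, c, hc, rfl⟩ := Submodule.mem_sup.mp hy'
    have hdEb : d ∈ Eb := hΔEb hd
    have hdE : d ∈ E := hΔE hd
    have hsplit : (⟨d + c, hy⟩ : ↥Eb) = ⟨d, hdEb⟩ + ⟨c, hC'le hc⟩ := Subtype.ext rfl
    rw [map_add, hψE d hdE, hψC' c hc, hφΔ d hdE hdEb, hsplit, map_add]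
  have hψreal : ∀ v : V, iV v ∈ Ws → (ψ (iV v)).im = 0 := by
    intro v hv
    obtain ⟨a, haE, b, hbE, hab⟩ := Submodule.mem_sup.mp hv
    have hkey : starRingEnd ℂ (ψ (iV v)) = ψ (iV v) := by
      have hconjv : conjCx (iV v) = iV v := conjCx_iV v
      have hca : conjCx a ∈ Eb := Submodule.mem_map_of_mem haE
      have hcb : conjCx b ∈ E := mem_conjE.mp hbE
      have h1 : starRingEnd ℂ (ψ a) = ψ (conjCx a) := by
        rw [hψE a haE, hψEb (conjCx a) hca, hφbdef, conjRestrict_apply]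
        have : (⟨conjCx (conjCx a), mem_conjE.mp hca⟩ : ↥E) = ⟨a, haE⟩ :=
          Subtype.ext (conjCx_conjCx a)
        rw [this]
      have h2 : starRingEnd ℂ (ψ b) = ψ (conjCx b) := by
        rw [hψEb b hbE, hφbdef, conjRestrict_apply, Complex.conj_conj, hψE (conjCx b) hcb]
      calc starRingEnd ℂ (ψ (iV v)) = starRingEnd ℂ (ψ a + ψ b) := by
            rw [← hab, map_add]
        _ = ψ (conjCx a) + ψ (conjCx b) := by rw [map_add, h1, h2]
        _ = ψ (conjCx (a + b)) := by rw [map_add conjCx a b, map_add]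
        _ = ψ (iV v) := by rw [hab, hconjv]
    exact Complex.conj_eq_iff_im.mp hkey
  set α := Complex.reLm ∘ₗ (ψ.restrictScalars ℝ) ∘ₗ iV with hαdef
  have hαW : ∀ x ∈ Ws, dualExt α x = ψ x := by
    intro x hx
    refine eqOn_real hWstable _ _ (fun v hv => ?_) hx
    rw [dualExt_iV]
    have : α v = (ψ (iV v)).re := rfl
    rw [this]
    exact Complex.ext (by simp) (by simp [hψreal v hv])
  exact ⟨α, fun y hy => by rw [hαW y (Submodule.mem_sup_left hy), hψE y hy]⟩

end CDirac

end Aux2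
open CDirac Module

/-- For a lagrangian `L = L(E,ε) ⊆ 𝕋_ℂV`, with `K` the real part of
`L ∩ L̄`, one has `pr_V(K^⊥) = D = (E+Ē) ∩ V` and
`pr_V(K) = Δ₀ = ker (Im ε|_{Δ×Δ}) ⊆ Δ = (E∩Ē) ∩ V`. -/
theorem stmt7 (V : Type*) [AddCommGroup V] [Module ℝ V] [FiniteDimensional ℝ V]
    (L : Submodule ℂ (TCx V)) (hL : IsLagrangianC L)
    (E : Submodule ℂ (Cx V)) (hE : E = Esub L)
    (ε : ↥E →ₗ[ℂ] ↥E →ₗ[ℂ] ℂ) (halt : ∀ x : ↥E, ε x x = 0)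
    (hchar : ∀ a : TCx V, a ∈ L ↔ ∃ h : a.1 ∈ E, ∀ y : ↥E, a.2 ↑y = ε ⟨a.1, h⟩ y)
    (K : Submodule ℝ (TR V)) (hK : K = Ksub L)
    (D : Submodule ℝ V) (hD : D = ((E ⊔ conjE E).restrictScalars ℝ).comap iV) :
    (orthR K).map (LinearMap.fst ℝ V (V →ₗ[ℝ] ℝ)) = D ∧
    ((K.map (LinearMap.fst ℝ V (V →ₗ[ℝ] ℝ)) : Set V) =
      {X : V | ∃ (h1 : iV X ∈ E) (_ : iV X ∈ conjE E),
        ∀ (Y : V) (g1 : iV Y ∈ E) (_ : iV Y ∈ conjE E),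
          (ε ⟨iV X, h1⟩ ⟨iV Y, g1⟩).im = 0}) := by
  have memK : ∀ a : TR V, a ∈ K ↔ iT a ∈ L := by
    intro a
    rw [hK, Ksub, Submodule.mem_comap, Submodule.restrictScalars_mem, Submodule.mem_inf]
    constructor
    · exact fun h => h.1
    · intro h; exact ⟨h, mem_conjSub.mpr (by rwa [conjT_iT])⟩
  have horth : ∀ m ∈ L, ∀ b ∈ L, pairC m b = 0 := by
    intro m hm
    exact mem_orthC.mp (hL ▸ hm)
  constructor
  · -- pr_V(K^⊥) = D
    ext X
    rw [Submodule.mem_map]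
    constructor
    · rintro ⟨⟨X', α⟩, ha, rfl⟩
      show X' ∈ D
      rw [hD, Submodule.mem_comap, Submodule.restrictScalars_mem]
      by_contra hnot
      obtain ⟨ξ, hξx, hξ0⟩ :=
        Submodule.exists_dual_map_eq_bot_of_notMem hnot inferInstance
      have hξW : ∀ y ∈ E ⊔ conjE E, ξ y = 0 := by
        intro y hy
        have : ξ y ∈ (E ⊔ conjE E).map ξ := Submodule.mem_map_of_mem hy
        rw [hξ0] at this
        exact (Submodule.mem_bot ℂ).mp this
      set ξ' : DualC V := (ξ (iV X'))⁻¹ • ξ with hξ'def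
      have hξ'X : ξ' (iV X') = 1 := by
        rw [hξ'def, LinearMap.smul_apply, smul_eq_mul, inv_mul_cancel₀ hξx]
      have hξ'W : ∀ y ∈ E ⊔ conjE E, ξ' y = 0 := by
        intro y hy
        rw [hξ'def, LinearMap.smul_apply, hξW y hy, smul_zero]
      set β : V →ₗ[ℝ] ℝ := Complex.reLm ∘ₗ (ξ'.restrictScalars ℝ) ∘ₗ iV with hβdef
      have hβE : ∀ y ∈ E, dualExt β y = 0 := by
        intro y hy
        have hWstable : ∀ z ∈ E ⊔ conjE E, conjCx z ∈ E ⊔ conjE E := by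
          intro z hz
          obtain ⟨a, haE, b, hbE, rfl⟩ := Submodule.mem_sup.mp hz
          rw [map_add]
          exact Submodule.add_mem _
            (Submodule.mem_sup_right (Submodule.mem_map_of_mem haE))
            (Submodule.mem_sup_left (mem_conjE.mp hbE))
        refine eqOn_real hWstable (dualExt β) 0 (fun v hv => ?_)
          (Submodule.mem_sup_left hy)
        rw [dualExt_iV, LinearMap.zero_apply]
        have : β v = (ξ' (iV v)).re := rfl
        rw [this, hξ'W _ hv]
        simp
      have hbK : ((0, β) : TR V) ∈ K := by
        rw [memK]
        have hmem : (iT ((0 : V), β)).1 ∈ E := by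
          show iV 0 ∈ E
          rw [map_zero]; exact E.zero_mem
        refine (hchar _).mpr ⟨hmem, fun y => ?_⟩
        show dualExt β ↑y = _
        rw [hβE ↑y y.2]
        have h0 : (⟨(iT ((0 : V), β)).1, hmem⟩ : ↥E) = 0 :=
          Subtype.ext (by show iV 0 = 0; rw [map_zero])
        rw [h0, map_zero, LinearMap.zero_apply]
      have := ha (0, β) hbK
      rw [pairR] at this
      have hβX : β X' = 1 := by
        have : β X' = (ξ' (iV X')).re := rfl
        rw [this, hξ'X]; rfl
      rw [hβX] at this
      simp at this
    · intro hXD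
      rw [hD, Submodule.mem_comap, Submodule.restrictScalars_mem] at hXD
      obtain ⟨e, he, f', hf', hef⟩ := Submodule.mem_sup.mp hXD
      obtain ⟨f, hf, rfl⟩ := hf'
      set ξe : DualC V := Subspace.dualLift E (ε ⟨e, he⟩) with hξe
      set ξf : DualC V := Subspace.dualLift E (ε ⟨f, hf⟩) with hξf
      have hle : ((e, ξe) : TCx V) ∈ L := by
        refine (hchar _).mpr ⟨he, fun y => ?_⟩
        exact Subspace.dualLift_of_subtype y
      have hlf : ((f, ξf) : TCx V) ∈ L := by
        refine (hchar _).mpr ⟨hf, fun y => ?_⟩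
        exact Subspace.dualLift_of_subtype y
      set u : TCx V := (2:ℂ)⁻¹ • (((e, ξe) + conjT (f, ξf)) + (conjT (e, ξe) + (f, ξf)))
        with hu
      have hu1 : u.1 = iV X := by
        have hc1 : conjT ((f, ξf) : TCx V) = (conjCx f, conjDual ξf) := rfl
        have hc2 : conjT ((e, ξe) : TCx V) = (conjCx e, conjDual ξe) := rfl
        have : u.1 = (2:ℂ)⁻¹ • ((e + conjCx f) + (conjCx e + f)) := by
          rw [hu, hc1, hc2]; rfl
        rw [this, show conjCx e + f = conjCx (e + conjCx f) by
            rw [map_add, conjCx_conjCx], hef, conjCx_iV, ← two_smul ℂ, smul_smul]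
        norm_num
      have hufix : conjDual u.2 = u.2 := by
        have h2 : u.2 = (2:ℂ)⁻¹ • ((ξe + conjDual ξf) + (conjDual ξe + ξf)) := rfl
        rw [h2, map_smulₛₗ, map_add, map_add, map_add, conjDual_conjDual,
          conjDual_conjDual]
        rw [show (starRingEnd ℂ) (2:ℂ)⁻¹ = (2:ℂ)⁻¹ by
          rw [map_inv₀, map_ofNat]]
        congr 1
        abel
      have himu : ∀ v : V, (u.2 (iV v)).im = 0 := by
        intro v
        have : starRingEnd ℂ (u.2 (iV v)) = u.2 (iV v) := by
          conv_rhs => rw [← hufix]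
          rw [conjDual_apply, conjCx_iV]
        exact Complex.conj_eq_iff_im.mp this
      obtain ⟨α, hα⟩ := exists_real_dual u.2 himu
      have hiTu : iT (X, α) = u := by
        have : iT ((X, α) : TR V) = (iV X, dualExt α) := rfl
        rw [this, hα, ← hu1]
      refine ⟨(X, α), ?_, rfl⟩
      show ((X, α) : TR V) ∈ orthR K
      rw [mem_orthR]
      intro b hb
      have hbL : iT b ∈ L := (memK b).mp hb
      have hC : (↑(pairR (X, α) b) : ℂ) = 0 := by
        rw [← pairC_iT, hiTu, hu, pairC_smul_left, pairC_add_left, pairC_add_left,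
          pairC_add_left]
        have z1 : pairC (e, ξe) (iT b) = 0 := horth _ hle _ hbL
        have z2 : pairC (f, ξf) (iT b) = 0 := horth _ hlf _ hbL
        have z3 : pairC (conjT (f, ξf)) (iT b) = 0 := by
          conv_lhs => rw [← conjT_iT b]
          rw [pairC_conjT, z2, map_zero]
        have z4 : pairC (conjT (e, ξe)) (iT b) = 0 := by
          conv_lhs => rw [← conjT_iT b]
          rw [pairC_conjT, z1, map_zero]
        rw [z1, z2, z3, z4]
        ring
      exact_mod_cast hC
  · -- pr_V(K) = Δ₀
    ext X
    simp only [SetLike.mem_coe, Submodule.mem_map, Set.mem_setOf_eq]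
    constructor
    · rintro ⟨⟨X', α⟩, ha, rfl⟩
      have haL : iT (X', α) ∈ L := (memK _).mp ha
      obtain ⟨h, hy⟩ := (hchar _).mp haL
      have h1 : iV X' ∈ E := h
      refine ⟨h1, mem_conjE.mpr (by rwa [conjCx_iV]), ?_⟩
      intro Y g1 g2
      have := hy ⟨iV Y, g1⟩
      have hXX : (⟨(iT ((X', α) : TR V)).1, h⟩ : ↥E) = ⟨iV X', h1⟩ := rfl
      rw [hXX] at this
      have hd : (iT ((X', α) : TR V)).2 (↑(⟨iV Y, g1⟩ : ↥E)) = (α Y : ℂ) := by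
        show dualExt α (iV Y) = _
        rw [dualExt_iV]
      rw [hd] at this
      show ((ε ⟨iV X', h1⟩) ⟨iV Y, g1⟩).im = 0
      rw [← this]
      simp
    · rintro ⟨h1, _h2, him⟩
      obtain ⟨α, hα⟩ := exists_real_restriction E (ε ⟨iV X, h1⟩)
        (fun v hv hv' => him v hv hv')
      refine ⟨(X, α), ?_, rfl⟩
      rw [memK]
      refine (hchar _).mpr ⟨h1, fun y => ?_⟩
      show dualExt α ↑y = _
      rw [hα ↑y y.2]
      rfl
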